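/- (One-step EXP potential inequality.) Let x₁, x_t ∈ ℝⁿ_{>0}, let L_t ∈ ℝⁿ with η_t L_{t,i} ≥ −1 for all i, let 0 < η_{t+1} ≤ η_t, and define x̃_{t+1,i} = x_{1,i}^{1−η_{t+1}/η_t} x_{t,i}^{η_{t+1}/η_t} exp(−η_{t+1} L_{t,i}). Then for every y ∈ ℝⁿ_{≥0}: D(y, x̃_{t+1})/η_{t+1} − D(y, x_t)/η_t + (1/η_t − 1/η_{t+1}) D(y, x₁) ≤ −L_tᵀ x_t + (e−2) η_t ∑_{i=1}^{n} x_{t,i} L_{t,i}² + L_tᵀ y. -/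

import Mathlib

set_option maxHeartbeats 1000000

noncomputable def KL {n : ℕ} (u v : Fin n → ℝ) : ℝ :=
  ∑ i, u i * Real.log (u i / v i) - ∑ i, u i + ∑ i, v i

lemma exp_tail_eq (x : ℝ) :
    Real.exp x = 1 + x + ∑' n : ℕ, x ^ (n + 2) / (n + 2).factorial := by
  have hs : Summable (fun n : ℕ => x ^ n / n.factorial) :=
    Real.summable_pow_div_factorial x
  have h := hs.sum_add_tsum_nat_add 2
  have hexp : Real.exp x = ∑' n : ℕ, x ^ n / n.factorial := by
    rw [Real.exp_eq_exp_ℝ, NormedSpace.exp_eq_tsum_div]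
  rw [hexp, ← h]
  simp [Finset.sum_range_succ, Nat.factorial]

lemma summable_tail (x : ℝ) :
    Summable (fun n : ℕ => x ^ (n + 2) / (n + 2).factorial) :=
  (summable_nat_add_iff (f := fun n : ℕ => x ^ n / n.factorial) 2).2
    (Real.summable_pow_div_factorial x)

lemma exp_quad {b : ℝ} (hb : b ≤ 1) :
    Real.exp b ≤ 1 + b + (Real.exp 1 - 2) * b ^ 2 := by
  rcases le_or_gt 0 b with h0 | h0
  · have hb2 := exp_tail_eq b
    have he := exp_tail_eq 1
    have hsb := summable_tail b
    have hs1 := summable_tail 1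
    have hle : ∑' n : ℕ, b ^ (n + 2) / (n + 2).factorial
        ≤ ∑' n : ℕ, b ^ 2 * ((1 : ℝ) ^ (n + 2) / (n + 2).factorial) := by
      apply hsb.tsum_le_tsum _ (hs1.mul_left _)
      intro n
      rw [one_pow, mul_one_div]
      have hpow : b ^ (n + 2) ≤ b ^ 2 := by
        calc b ^ (n + 2) = b ^ n * b ^ 2 := by ring
          _ ≤ 1 * b ^ 2 :=
              mul_le_mul_of_nonneg_right (pow_le_one₀ h0 hb) (sq_nonneg b)
          _ = b ^ 2 := one_mul _
      gcongr
    rw [tsum_mul_left] at hle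
    have hT : Real.exp 1 - 2 = ∑' n : ℕ, (1 : ℝ) ^ (n + 2) / (n + 2).factorial := by
      rw [he]; ring
    rw [hT, hb2]
    nlinarith [hle]
  · -- b < 0
    have hc : (0 : ℝ) ≤ -b := by linarith
    have he27 : (2.7 : ℝ) ≤ Real.exp 1 :=
      le_of_lt (lt_trans (by norm_num) Real.exp_one_gt_d9)
    have h1 : 1 + -b + (-b) ^ 2 / 2 ≤ Real.exp (-b) := by
      have h := Real.sum_le_exp_of_nonneg hc 3
      rw [Finset.sum_range_succ, Finset.sum_range_succ, Finset.sum_range_one] at h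
      norm_num [Nat.factorial] at h
      nlinarith [h]
    have hE : (0 : ℝ) < Real.exp (-b) := Real.exp_pos _
    have hPE : Real.exp b * Real.exp (-b) = 1 := by
      rw [← Real.exp_add]; simp
    have p1 : (0 : ℝ) ≤ (Real.exp 1 - 2 - 1/2) * b ^ 2 :=
      mul_nonneg (by linarith) (sq_nonneg b)
    have hb3 : b ^ 3 ≤ 0 := by nlinarith [sq_nonneg b]
    have p2 : (0 : ℝ) ≤ (Real.exp 1 - 2 - 1/2) * (-(b ^ 3)) :=
      mul_nonneg (by linarith) (by linarith)
    have p3 : (0 : ℝ) ≤ (Real.exp 1 - 2) * b ^ 4 :=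
      mul_nonneg (by linarith) (by positivity)
    have h4 : 1 ≤ (1 + b + (Real.exp 1 - 2) * b ^ 2) * (1 + -b + (-b) ^ 2 / 2) := by
      nlinarith [p1, p2, p3]
    have hA : (0 : ℝ) < 1 + b + (Real.exp 1 - 2) * b ^ 2 := by
      nlinarith [sq_nonneg (b + 1)]
    have h5 : 1 ≤ (1 + b + (Real.exp 1 - 2) * b ^ 2) * Real.exp (-b) :=
      h4.trans (mul_le_mul_of_nonneg_left h1 hA.le)
    have h6 : Real.exp b * Real.exp (-b)
        ≤ (1 + b + (Real.exp 1 - 2) * b ^ 2) * Real.exp (-b) := by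
      rw [hPE]; exact h5
    exact le_of_mul_le_mul_right h6 hE

theorem exp_one_step_potential (n : ℕ) (x₁ xt : Fin n → ℝ)
    (hx₁ : ∀ i, 0 < x₁ i) (hxt : ∀ i, 0 < xt i)
    (L : Fin n → ℝ) (ηt ηt1 : ℝ) (hηt1 : 0 < ηt1) (hle : ηt1 ≤ ηt)
    (hL : ∀ i, -1 ≤ ηt * L i)
    (xtilde : Fin n → ℝ)
    (hxtilde : ∀ i, xtilde i
      = x₁ i ^ (1 - ηt1 / ηt) * xt i ^ (ηt1 / ηt) * Real.exp (-ηt1 * L i))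
    (y : Fin n → ℝ) (hy : ∀ i, 0 ≤ y i) :
    KL y xtilde / ηt1 - KL y xt / ηt + (1 / ηt - 1 / ηt1) * KL y x₁
      ≤ -(∑ i, L i * xt i)
        + (Real.exp 1 - 2) * ηt * ∑ i, xt i * (L i) ^ 2
        + ∑ i, L i * y i := by
  have hηt : (0 : ℝ) < ηt := lt_of_lt_of_le hηt1 hle
  have hηtne : ηt ≠ 0 := hηt.ne'
  have hηt1ne : ηt1 ≠ 0 := hηt1.ne'
  have ha0 : 0 < ηt1 / ηt := div_pos hηt1 hηt
  have ha1 : ηt1 / ηt ≤ 1 := (div_le_one hηt).2 hle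
  -- pointwise value bound
  have hv : ∀ i, xtilde i / ηt1 - xt i / ηt + (1 / ηt - 1 / ηt1) * x₁ i
      ≤ -(L i * xt i) + (Real.exp 1 - 2) * ηt * (xt i * L i ^ 2) := by
    intro i
    have hEq : Real.exp (-ηt * L i)
        ≤ 1 + -(ηt * L i) + (Real.exp 1 - 2) * (ηt * L i) ^ 2 := by
      have := exp_quad (b := -(ηt * L i)) (by linarith [hL i])
      simpa [neg_mul] using this
    have harg : -ηt * L i * (ηt1 / ηt) = -ηt1 * L i := by
      field_simp
    have hmul : (xt i * Real.exp (-ηt * L i)) ^ (ηt1 / ηt)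
        = xt i ^ (ηt1 / ηt) * Real.exp (-ηt1 * L i) := by
      rw [Real.mul_rpow (hxt i).le (Real.exp_pos _).le, ← Real.exp_mul, harg]
    have hstep : xtilde i ≤ (1 - ηt1 / ηt) * x₁ i
        + (ηt1 / ηt) * (xt i * Real.exp (-ηt * L i)) := by
      rw [hxtilde i, mul_assoc, ← hmul]
      exact Real.geom_mean_le_arith_mean2_weighted (by linarith) ha0.le (hx₁ i).le
        (mul_pos (hxt i) (Real.exp_pos _)).le (by ring)
    have hB : xtilde i ≤ (1 - ηt1 / ηt) * x₁ i
        + (ηt1 / ηt) * (xt i * (1 + -(ηt * L i) + (Real.exp 1 - 2) * (ηt * L i) ^ 2)) := by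
      refine hstep.trans ?_
      have h2 := mul_le_mul_of_nonneg_left hEq (hxt i).le
      nlinarith [h2, ha0.le]
    have hdiv : xtilde i / ηt1 ≤ ((1 - ηt1 / ηt) * x₁ i
        + (ηt1 / ηt) * (xt i * (1 + -(ηt * L i) + (Real.exp 1 - 2) * (ηt * L i) ^ 2))) / ηt1 :=
      div_le_div_of_nonneg_right hB hηt1.le
    have hEqB : ((1 - ηt1 / ηt) * x₁ i
        + (ηt1 / ηt) * (xt i * (1 + -(ηt * L i) + (Real.exp 1 - 2) * (ηt * L i) ^ 2))) / ηt1
        - xt i / ηt + (1 / ηt - 1 / ηt1) * x₁ i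
        = -(L i * xt i) + (Real.exp 1 - 2) * ηt * (xt i * L i ^ 2) := by
      field_simp
      ring
    linarith [hdiv, hEqB.ge, hEqB.le]
  -- pointwise key inequality
  have hkey : ∀ i,
      (y i * Real.log (y i / xtilde i) - y i + xtilde i) / ηt1
        - (y i * Real.log (y i / xt i) - y i + xt i) / ηt
        + (1 / ηt - 1 / ηt1) * (y i * Real.log (y i / x₁ i) - y i + x₁ i)
      ≤ L i * y i + (-(L i * xt i) + (Real.exp 1 - 2) * ηt * (xt i * L i ^ 2)) := by
    intro i
    have hxtpos : 0 < xtilde i := by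
      rw [hxtilde i]
      exact mul_pos (mul_pos (Real.rpow_pos_of_pos (hx₁ i) _)
        (Real.rpow_pos_of_pos (hxt i) _)) (Real.exp_pos _)
    have hid : (y i * Real.log (y i / xtilde i) - y i + xtilde i) / ηt1
        - (y i * Real.log (y i / xt i) - y i + xt i) / ηt
        + (1 / ηt - 1 / ηt1) * (y i * Real.log (y i / x₁ i) - y i + x₁ i)
        = L i * y i + (xtilde i / ηt1 - xt i / ηt + (1 / ηt - 1 / ηt1) * x₁ i) := by
      rcases eq_or_lt_of_le (hy i) with h0 | h0
      · rw [← h0]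
        field_simp
        try ring
      · have hlt : Real.log (xtilde i)
            = (1 - ηt1 / ηt) * Real.log (x₁ i) + (ηt1 / ηt) * Real.log (xt i)
              + (-ηt1 * L i) := by
          rw [hxtilde i,
            Real.log_mul (mul_pos (Real.rpow_pos_of_pos (hx₁ i) _)
              (Real.rpow_pos_of_pos (hxt i) _)).ne' (Real.exp_ne_zero _),
            Real.log_mul (Real.rpow_pos_of_pos (hx₁ i) _).ne'
              (Real.rpow_pos_of_pos (hxt i) _).ne',
            Real.log_rpow (hx₁ i), Real.log_rpow (hxt i), Real.log_exp]
        rw [Real.log_div h0.ne' hxtpos.ne', Real.log_div h0.ne' (hxt i).ne',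
          Real.log_div h0.ne' (hx₁ i).ne', hlt]
        field_simp
        ring
    rw [hid]
    linarith [hv i]
  -- expand KL into a single sum
  have hexpand : KL y xtilde / ηt1 - KL y xt / ηt + (1 / ηt - 1 / ηt1) * KL y x₁
      = ∑ i, ((y i * Real.log (y i / xtilde i) - y i + xtilde i) / ηt1
        - (y i * Real.log (y i / xt i) - y i + xt i) / ηt
        + (1 / ηt - 1 / ηt1) * (y i * Real.log (y i / x₁ i) - y i + x₁ i)) := by
    simp only [KL, sub_div, add_div, mul_sub, mul_add, Finset.sum_div, Finset.mul_sum,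
      Finset.sum_sub_distrib, Finset.sum_add_distrib]
    try ring
  rw [hexpand]
  calc ∑ i, ((y i * Real.log (y i / xtilde i) - y i + xtilde i) / ηt1
        - (y i * Real.log (y i / xt i) - y i + xt i) / ηt
        + (1 / ηt - 1 / ηt1) * (y i * Real.log (y i / x₁ i) - y i + x₁ i))
      ≤ ∑ i, (L i * y i + (-(L i * xt i) + (Real.exp 1 - 2) * ηt * (xt i * L i ^ 2))) :=
        Finset.sum_le_sum fun i _ => hkey i
    _ = -(∑ i, L i * xt i) + (Real.exp 1 - 2) * ηt * ∑ i, xt i * (L i) ^ 2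
        + ∑ i, L i * y i := by
      simp only [Finset.sum_add_distrib, ← Finset.sum_neg_distrib, ← Finset.mul_sum]
      try ring
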